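/- For any code C ⊆ (Z/qZ)^n with minimum cycle-semimetric distance at least d, and any clique cover of the strong power graph C_q^n of size χ̄(C_q^n), there exists a clique containing at least ⌈|C|/χ̄(C_q^n)⌉ codewords, and the codewords in any single clique of C_q^n can be injectively mapped to binary words of length n preserving pairwise distances; consequently M_q(n,d) ≤ χ̄(C_q^n) · M_2(n,d). -/
import Mathlib


open Finset

/-- The cycle semimetric on `ZMod q`. -/
def cycDist (q : ℕ) (v v' : ZMod q) : ℕ∞ :=
  if v = v' then 0 else if v - v' = 1 ∨ v' - v = 1 then 1 else ⊤

/-- Additive extension of the cycle semimetric to `(ZMod q)^n` (also gives Hamming distance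
for `q = 2`). -/
def cycDistN {q n : ℕ} (x y : Fin n → ZMod q) : ℕ∞ :=
  ∑ i, cycDist q (x i) (y i)

/-- Maximum size of a code in `(ZMod q)^n` with minimum cycle-semimetric distance at least `d`. -/
noncomputable def M (q n d : ℕ) : ℕ :=
  sSup {m | ∃ C : Finset (Fin n → ZMod q), C.card = m ∧
    ∀ x ∈ C, ∀ y ∈ C, x ≠ y → (d : ℕ∞) ≤ cycDistN x y}

/-- A clique of the strong power `C_q^n`: a set of sequences which in each coordinate lie
within a common edge (a pair of adjacent-or-equal vertices) of the cycle. -/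
def IsEdgeClique (q n : ℕ) (K : Finset (Fin n → ZMod q)) : Prop :=
  ∃ e : Fin n → ZMod q, ∀ x ∈ K, ∀ i, x i = e i ∨ x i = e i + 1

lemma add_one_ne {q : ℕ} (hq : 3 ≤ q) (a : ZMod q) : a + 1 ≠ a := by
  haveI : Fact (1 < q) := ⟨by omega⟩
  intro h
  exact (one_ne_zero : (1 : ZMod q) ≠ 0) (by linear_combination h)

lemma key_coord {q : ℕ} (hq : 3 ≤ q) (e a b : ZMod q)
    (ha : a = e ∨ a = e + 1) (hb : b = e ∨ b = e + 1) :
    cycDist 2 (if a = e then 0 else 1) (if b = e then 0 else 1) = cycDist q a b := by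
  have hne : e + 1 ≠ e := add_one_ne hq e
  have h01 : cycDist 2 (0 : ZMod 2) 1 = 1 := by decide
  have h10 : cycDist 2 (1 : ZMod 2) 0 = 1 := by decide
  rcases ha with ha | ha <;> rcases hb with hb | hb
  · simp [cycDist, ha, hb]
  · have hbne : b ≠ e := by rw [hb]; exact hne
    have hab : a ≠ b := by rw [ha, hb]; exact (Ne.symm hne)
    rw [if_pos ha, if_neg hbne, h01]
    simp [cycDist, hab, show b - a = 1 from by rw [ha, hb]; ring]
  · have hane : a ≠ e := by rw [ha]; exact hne
    have hab : a ≠ b := by rw [ha, hb]; exact hne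
    rw [if_neg hane, if_pos hb, h10]
    simp [cycDist, hab, show a - b = 1 from by rw [ha, hb]; ring]
  · have hane : a ≠ e := by rw [ha]; exact hne
    have hbne : b ≠ e := by rw [hb]; exact hne
    have hab : a = b := ha.trans hb.symm
    rw [if_neg hane, if_neg hbne]
    simp [cycDist, hab]

lemma clique_embed {q n : ℕ} (hq : 3 ≤ q) {K : Finset (Fin n → ZMod q)}
    (hK : IsEdgeClique q n K) :
    ∃ f : (Fin n → ZMod q) → (Fin n → ZMod 2), Set.InjOn f K ∧
      ∀ x ∈ K, ∀ y ∈ K, cycDistN (f x) (f y) = cycDistN x y := by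
  obtain ⟨e, he⟩ := hK
  have hne : ∀ i, e i + 1 ≠ e i := fun i => add_one_ne hq (e i)
  refine ⟨fun x i => if x i = e i then 0 else 1, ?_, ?_⟩
  · intro x hx y hy hxy
    funext i
    have hi := congrFun hxy i
    simp only at hi
    rcases he x hx i with h1 | h1 <;> rcases he y hy i with h2 | h2
    · rw [h1, h2]
    · rw [if_pos h1, if_neg (h2 ▸ hne i)] at hi
      exact absurd hi (by decide)
    · rw [if_neg (h1 ▸ hne i), if_pos h2] at hi
      exact absurd hi (by decide)
    · rw [h1, h2]
  · intro x hx y hy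
    unfold cycDistN
    refine Finset.sum_congr rfl fun i _ => ?_
    exact key_coord hq (e i) (x i) (y i) (he x hx i) (he y hy i)

theorem stmt2 (q n d : ℕ) (hq : 3 ≤ q)
    (C : Finset (Fin n → ZMod q))
    (hC : ∀ x ∈ C, ∀ y ∈ C, x ≠ y → (d : ℕ∞) ≤ cycDistN x y)
    (𝒦 : Finset (Finset (Fin n → ZMod q)))
    (h𝒦 : 𝒦.Nonempty)
    (hclique : ∀ K ∈ 𝒦, IsEdgeClique q n K)
    (hcover : ∀ x : Fin n → ZMod q, ∃ K ∈ 𝒦, x ∈ K) :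
    (∃ K ∈ 𝒦, (C.card + 𝒦.card - 1) / 𝒦.card ≤ (C ∩ K).card) ∧
    (∀ K ∈ 𝒦, ∃ f : (Fin n → ZMod q) → (Fin n → ZMod 2),
      Set.InjOn f K ∧
      ∀ x ∈ K, ∀ y ∈ K, cycDistN (f x) (f y) = cycDistN x y) ∧
    M q n d ≤ 𝒦.card * M 2 n d := by
  haveI : NeZero q := ⟨by omega⟩
  have hm1 : 1 ≤ 𝒦.card := Finset.card_pos.mpr h𝒦
  -- a general covering sum bound
  have hcov_sum : ∀ C' : Finset (Fin n → ZMod q),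
      C'.card ≤ ∑ K ∈ 𝒦, (C' ∩ K).card := by
    intro C'
    have hsub : C' ⊆ 𝒦.biUnion fun K => C' ∩ K := by
      intro x hx
      obtain ⟨K, hK, hxK⟩ := hcover x
      exact Finset.mem_biUnion.mpr ⟨K, hK, Finset.mem_inter.mpr ⟨hx, hxK⟩⟩
    exact (Finset.card_le_card hsub).trans (Finset.card_biUnion_le)
  refine ⟨?_, fun K hK => clique_embed hq (hclique K hK), ?_⟩
  · by_contra hcon
    push_neg at hcon
    set t := (C.card + 𝒦.card - 1) / 𝒦.card with ht
    clear_value t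
    obtain ⟨K0, hK0⟩ := h𝒦
    have ht1 : 1 ≤ t := by have := hcon K0 hK0; omega
    obtain ⟨s, rfl⟩ : ∃ s, t = s + 1 := ⟨t - 1, by omega⟩
    have hsum2 : ∑ K ∈ 𝒦, (C ∩ K).card ≤ ∑ _K ∈ 𝒦, s :=
      Finset.sum_le_sum fun K hK => by have := hcon K hK; omega
    have hsum3 : ∑ _K ∈ 𝒦, s = 𝒦.card * s := by
      rw [Finset.sum_const, smul_eq_mul]
    have hmt : (s + 1) * 𝒦.card ≤ C.card + 𝒦.card - 1 := by
      rw [ht]; exact Nat.div_mul_le_self _ _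
    have hchain : C.card + 𝒦.card ≤ C.card + 𝒦.card - 1 :=
      calc C.card + 𝒦.card ≤ 𝒦.card * s + 𝒦.card := by
            have := (hcov_sum C).trans (hsum2.trans_eq hsum3); omega
        _ = (s + 1) * 𝒦.card := by ring
        _ ≤ C.card + 𝒦.card - 1 := hmt
    omega
  · -- M q n d ≤ 𝒦.card * M 2 n d
    have hbdd2 : BddAbove {m | ∃ D : Finset (Fin n → ZMod 2), D.card = m ∧
        ∀ x ∈ D, ∀ y ∈ D, x ≠ y → (d : ℕ∞) ≤ cycDistN x y} := by
      refine ⟨Fintype.card (Fin n → ZMod 2), ?_⟩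
      rintro m ⟨D, rfl, -⟩
      exact Finset.card_le_univ D
    apply csSup_le'
    rintro m ⟨C', rfl, hC'⟩
    have hKbound : ∀ K ∈ 𝒦, (C' ∩ K).card ≤ M 2 n d := by
      intro K hK
      obtain ⟨f, hinj, hpres⟩ := clique_embed hq (hclique K hK)
      have hsubK : ((C' ∩ K : Finset _) : Set (Fin n → ZMod q)) ⊆ (K : Set _) := by
        intro x hx; exact Finset.mem_inter.mp hx |>.2
      have hcard : ((C' ∩ K).image f).card = (C' ∩ K).card :=
        Finset.card_image_of_injOn (hinj.mono hsubK)
      have : ((C' ∩ K).image f).card ∈ {m | ∃ D : Finset (Fin n → ZMod 2), D.card = m ∧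
          ∀ x ∈ D, ∀ y ∈ D, x ≠ y → (d : ℕ∞) ≤ cycDistN x y} := by
        refine ⟨(C' ∩ K).image f, rfl, ?_⟩
        rintro u hu v hv huv
        obtain ⟨x, hx, rfl⟩ := Finset.mem_image.mp hu
        obtain ⟨y, hy, rfl⟩ := Finset.mem_image.mp hv
        obtain ⟨hx1, hx2⟩ := Finset.mem_inter.mp hx
        obtain ⟨hy1, hy2⟩ := Finset.mem_inter.mp hy
        have hxy : x ≠ y := fun h => huv (by rw [h])
        rw [hpres x hx2 y hy2]
        exact hC' x hx1 y hy1 hxy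
      calc (C' ∩ K).card = ((C' ∩ K).image f).card := hcard.symm
        _ ≤ M 2 n d := le_csSup hbdd2 this
    calc C'.card ≤ ∑ K ∈ 𝒦, (C' ∩ K).card := hcov_sum C'
      _ ≤ ∑ _K ∈ 𝒦, M 2 n d := Finset.sum_le_sum hKbound
      _ = 𝒦.card * M 2 n d := by rw [Finset.sum_const, smul_eq_mul]
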